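/- Let 0 < α < 1/2. For nonzero integers ξ, η with ξ+η ≠ 0 and opposite-sign resonance, the symbol σ^{+,−}(ξ,η) = |ξ+η|·⟨ξ⟩^α·⟨η⟩^α / (2·⟨ξ+η⟩^{1+α}·||ξ|⟨ξ⟩ − |η|⟨η⟩ − |ξ+η|⟨ξ+η⟩|) satisfies |σ^{+,−}(ξ,η)| ≤ C·⟨ξ⟩^α / (⟨ξ+η⟩^{α+1}·⟨η⟩^{1−α}) for a constant C independent of ξ, η. -/

import Mathlib

set_option maxHeartbeats 1000000


noncomputable def jap (x : ℝ) : ℝ := Real.sqrt (1 + x^2)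

noncomputable def sigmaPM (α : ℝ) (ξ η : ℤ) : ℝ :=
  |(ξ : ℝ) + η| * jap ξ ^ α * jap η ^ α /
    (2 * jap ((ξ : ℝ) + η) ^ (1 + α) *
      |(|(ξ : ℝ)| * jap ξ - |(η : ℝ)| * jap η - |(ξ : ℝ) + η| * jap ((ξ : ℝ) + η))|)

lemma jap_pos (x : ℝ) : 0 < jap x := Real.sqrt_pos.2 (by positivity)

lemma jap_sq (x : ℝ) : jap x ^ 2 = 1 + x ^ 2 := Real.sq_sqrt (by positivity)

lemma abs_lt_jap (x : ℝ) : |x| < jap x := by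
  nlinarith [jap_sq x, jap_pos x, abs_nonneg x, sq_abs x]

lemma t_lt (x : ℝ) : |x| * jap x - x ^ 2 < 1/2 := by
  nlinarith [mul_pos (sub_pos.2 (abs_lt_jap x)) (sub_pos.2 (abs_lt_jap x)),
    jap_sq x, sq_abs x]

lemma t_pos (x : ℝ) (hx : x ≠ 0) : 0 < |x| * jap x - x ^ 2 := by
  have h : 0 < |x| := abs_pos.2 hx
  nlinarith [abs_lt_jap x, sq_abs x]

lemma jap_le (x : ℝ) (hx : 1 ≤ |x|) : jap x ≤ 2 * |x| := by
  nlinarith [jap_sq x, jap_pos x, sq_abs x, abs_nonneg x]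

lemma denom_lb (ξ η : ℤ) (hξ : ξ ≠ 0) (hη : η ≠ 0) (hs : ξ + η ≠ 0) :
    jap η * jap ((ξ : ℝ) + η) ≤
      2 * |(|(ξ : ℝ)| * jap ξ - |(η : ℝ)| * jap η - |(ξ : ℝ) + η| * jap ((ξ : ℝ) + η))| := by
  set a : ℝ := (ξ : ℝ)
  set b : ℝ := (η : ℝ)
  have hb1 : (1 : ℝ) ≤ |b| := by
    have := Int.one_le_abs hη
    calc (1:ℝ) ≤ ((|η| : ℤ) : ℝ) := by exact_mod_cast this
    _ = |b| := by rw [Int.cast_abs]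
  have hs1 : (1 : ℝ) ≤ |a + b| := by
    have := Int.one_le_abs hs
    calc (1:ℝ) ≤ ((|ξ + η| : ℤ) : ℝ) := by exact_mod_cast this
    _ = |a + b| := by rw [Int.cast_abs]; push_cast; rfl
  have ha0 : a ≠ 0 := Int.cast_ne_zero.2 hξ
  have hb0 : b ≠ 0 := by intro h; simp [b] at h; exact hη (by exact_mod_cast h)
  have hs0 : a + b ≠ 0 := by
    have : ((ξ + η : ℤ) : ℝ) ≠ 0 := Int.cast_ne_zero.2 hs
    push_cast at this; exact this
  have ta := t_pos a ha0; have ta' := t_lt a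
  have tb := t_pos b hb0; have tb' := t_lt b
  have ts := t_pos (a + b) hs0; have ts' := t_lt (a + b)
  set D : ℝ := |a| * jap a - |b| * jap b - |a + b| * jap (a + b) with hD
  -- D = -2 b (a+b) + e with |e| < 1
  have key : |D| ≥ |b| * |a + b| := by
    have habs : |b * (a + b)| = |b| * |a + b| := abs_mul _ _
    have h1 : (1:ℝ) ≤ |b| * |a + b| := by nlinarith
    have hDe : D + 2 * (b * (a + b)) =
        (|a| * jap a - a ^ 2) - (|b| * jap b - b ^ 2) - (|a+b| * jap (a+b) - (a+b) ^ 2) := by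
      ring
    have he : |D + 2 * (b * (a + b))| < 1 := by
      rw [hDe]; rw [abs_lt]; constructor <;> nlinarith
    have h2 : 2 * |b * (a + b)| - 1 ≤ |D| := by
      have := abs_sub_abs_le_abs_sub (2 * (b * (a+b))) (-D)
      rw [abs_mul] at *
      have habs2 : |(2:ℝ)| = 2 := by norm_num
      calc 2 * (|b| * |a + b|) - 1 ≤ |2 * (b * (a+b))| - |D + 2 * (b * (a+b))| := by
            rw [abs_mul, abs_mul, habs2]
            have : |D + 2 * (b * (a + b))| ≤ 1 := le_of_lt he
            linarith
        _ ≤ |2 * (b * (a+b)) - (D + 2 * (b * (a+b)))| := abs_sub_abs_le_abs_sub _ _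
        _ = |D| := by rw [show 2 * (b * (a+b)) - (D + 2 * (b * (a+b))) = -D by ring, abs_neg]
    rw [abs_mul] at h2
    nlinarith
  have hb2 : (1:ℝ) ≤ b ^ 2 := by nlinarith [sq_abs b]
  have hs2 : (1:ℝ) ≤ (a + b) ^ 2 := by nlinarith [sq_abs (a+b)]
  have hX2 : (jap b * jap (a + b)) ^ 2 ≤ (2 * (|b| * |a + b|)) ^ 2 := by
    have e1 := jap_sq b
    have e2 := jap_sq (a + b)
    have e3 := sq_abs b
    have e4 := sq_abs (a + b)
    nlinarith [mul_nonneg (sub_nonneg.2 hb2) (sub_nonneg.2 hs2)]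
  have hfin : jap b * jap (a + b) ≤ 2 * (|b| * |a + b|) := by
    nlinarith [mul_pos (jap_pos b) (jap_pos (a+b)), abs_nonneg b, abs_nonneg (a+b),
      mul_nonneg (abs_nonneg b) (abs_nonneg (a+b))]
  linarith

theorem sigmaPM_bound (α : ℝ) (hα : 0 < α) (hα' : α < 1/2) :
    ∃ C : ℝ, 0 < C ∧
      ∀ ξ η : ℤ, ξ ≠ 0 → η ≠ 0 → ξ + η ≠ 0 →
        |sigmaPM α ξ η| ≤ C * jap ξ ^ α / (jap ((ξ : ℝ) + η) ^ (α + 1) * jap η ^ (1 - α)) := by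
  refine ⟨1, one_pos, fun ξ η hξ hη hs => ?_⟩
  set a : ℝ := (ξ : ℝ)
  set b : ℝ := (η : ℝ)
  set D : ℝ := |a| * jap a - |b| * jap b - |a + b| * jap (a + b) with hDdef
  have hja := jap_pos a
  have hjb := jap_pos b
  have hjs := jap_pos (a + b)
  have hdl := denom_lb ξ η hξ hη hs
  have hDpos : 0 < |D| := by
    nlinarith [mul_pos hjb hjs]
  -- rpow positivity
  have hpa : 0 < jap a ^ α := Real.rpow_pos_of_pos hja α
  have hpb : 0 < jap b ^ α := Real.rpow_pos_of_pos hjb α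
  have hpb' : 0 < jap b ^ (1 - α) := Real.rpow_pos_of_pos hjb (1 - α)
  have hps : 0 < jap (a + b) ^ (1 + α) := Real.rpow_pos_of_pos hjs (1 + α)
  have hps' : 0 < jap (a + b) ^ (α + 1) := Real.rpow_pos_of_pos hjs (α + 1)
  have hden : 0 < 2 * jap (a + b) ^ (1 + α) * |D| := by positivity
  have hsig : sigmaPM α ξ η = |a + b| * jap a ^ α * jap b ^ α /
      (2 * jap (a + b) ^ (1 + α) * |D|) := rfl
  have hnonneg : 0 ≤ sigmaPM α ξ η := by
    rw [hsig]
    exact div_nonneg (by positivity) (le_of_lt hden)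
  rw [abs_of_nonneg hnonneg, hsig]
  rw [div_le_div_iff₀ hden (by positivity), one_mul]
  -- goal: N * (jap(a+b)^(α+1) * jap b^(1-α)) ≤ jap a ^ α * (2 * jap(a+b)^(1+α) * |D|)
  have hmul : jap b ^ α * jap b ^ (1 - α) = jap b := by
    rw [← Real.rpow_add hjb]
    norm_num
  have hexp : jap (a + b) ^ (α + 1) = jap (a + b) ^ (1 + α) := by rw [add_comm α 1]
  have habs : |a + b| ≤ jap (a + b) := le_of_lt (abs_lt_jap (a + b))
  have key : |a + b| * jap b ≤ 2 * |D| := by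
    have h1 : jap b * jap (a + b) ≤ 2 * |D| := hdl
    nlinarith [abs_nonneg (a + b)]
  calc |a + b| * jap a ^ α * jap b ^ α * (jap (a + b) ^ (α + 1) * jap b ^ (1 - α))
      = (|a + b| * jap b) * jap a ^ α * jap (a + b) ^ (1 + α) := by
        rw [hexp]
        rw [show |a + b| * jap a ^ α * jap b ^ α * (jap (a + b) ^ (1 + α) * jap b ^ (1 - α))
          = |a + b| * (jap b ^ α * jap b ^ (1 - α)) * jap a ^ α * jap (a + b) ^ (1 + α) by ring,
          hmul]
    _ ≤ (2 * |D|) * jap a ^ α * jap (a + b) ^ (1 + α) := by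
        apply mul_le_mul_of_nonneg_right (mul_le_mul_of_nonneg_right key (le_of_lt hpa))
          (le_of_lt hps)
    _ = jap a ^ α * (2 * jap (a + b) ^ (1 + α) * |D|) := by ring
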